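/- Let X_1, …, X_R be independent random variables with continuous distribution functions F_1, …, F_R, all bounded above by a common Gumbel-type bound. If for normalizing constants a_R > 0, b_R we have Π_{r=1}^R F_r(a_R γ + b_R) → exp(-exp(-γ)) pointwise, then for every positive integer k, P((X_{(R-k+1:R)} - b_R)/a_R ≤ γ) → Σ_{r=0}^{k-1} (exp(-γ))^r/r! · exp(-exp(-γ)), where X_{(R-k+1:R)} denotes the k-th largest order statistic, provided max_r (1 - F_r(a_R γ + b_R)) → 0. -/

import Mathlib

open Real Filter Finset MeasureTheory ProbabilityTheory


lemma log_one_add_le {x : ℝ} (hx : 0 ≤ x) : Real.log (1 + x) ≤ x := by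
  have := Real.log_le_sub_one_of_pos (show (0:ℝ) < 1 + x by linarith)
  linarith

lemma le_mul_log_one_add {x : ℝ} (hx : 0 ≤ x) : x ≤ (1 + x) * Real.log (1 + x) := by
  have h1 : (0:ℝ) < 1 + x := by linarith
  have := Real.log_le_sub_one_of_pos (show (0:ℝ) < (1+x)⁻¹ by positivity)
  rw [Real.log_inv] at this
  have h2 : Real.log (1 + x) ≥ 1 - (1+x)⁻¹ := by linarith
  have h3 : (1+x) * (1 - (1+x)⁻¹) = x := by field_simp; ring
  nlinarith [Real.log_nonneg (by linarith : (1:ℝ) ≤ 1 + x)]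

lemma sum_tendsto_of_log {x : ℕ → ℕ → ℝ} {l : ℝ}
    (hx0 : ∀ᶠ R in atTop, ∀ r ∈ Finset.range R, 0 ≤ x R r)
    (hlog : Tendsto (fun R => ∑ r ∈ Finset.range R, Real.log (1 + x R r)) atTop (nhds l))
    (hmax : ∀ ε > (0:ℝ), ∀ᶠ R in atTop, ∀ r ∈ Finset.range R, x R r ≤ ε) :
    Tendsto (fun R => ∑ r ∈ Finset.range R, x R r) atTop (nhds l) := by
  have hl : 0 ≤ l := by
    have : ∀ᶠ R in atTop, 0 ≤ ∑ r ∈ Finset.range R, Real.log (1 + x R r) := by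
      filter_upwards [hx0] with R hR
      exact Finset.sum_nonneg fun r hr => Real.log_nonneg (by linarith [hR r hr])
    exact le_of_tendsto_of_tendsto tendsto_const_nhds hlog this
  rw [Metric.tendsto_nhds]
  intro ε hε
  set δ : ℝ := min 1 (ε / (2 * (l + 2))) with hδdef
  have hδpos : 0 < δ := lt_min one_pos (by positivity)
  have hδ1 : δ ≤ 1 := min_le_left _ _
  have hδ2 : δ * (l + 2) ≤ ε / 2 := by
    have : δ ≤ ε / (2 * (l + 2)) := min_le_right _ _
    have h := mul_le_mul_of_nonneg_right this (by linarith : (0:ℝ) ≤ l + 2)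
    have he : ε / (2 * (l + 2)) * (l + 2) = ε / 2 := by
      field_simp
    linarith
  filter_upwards [hx0, hmax δ hδpos,
    (Metric.tendsto_nhds.mp hlog) (min δ (ε/2)) (lt_min hδpos (by positivity))]
    with R h0 hm hL
  have hLb : |(∑ r ∈ Finset.range R, Real.log (1 + x R r)) - l| < min δ (ε/2) := by
    simpa [Real.dist_eq] using hL
  set L := ∑ r ∈ Finset.range R, Real.log (1 + x R r) with hLdef
  have hlow : L ≤ ∑ r ∈ Finset.range R, x R r :=
    Finset.sum_le_sum fun r hr => log_one_add_le (h0 r hr)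
  have hup : ∑ r ∈ Finset.range R, x R r ≤ (1 + δ) * L := by
    rw [Finset.mul_sum]
    refine Finset.sum_le_sum fun r hr => ?_
    have h1 := le_mul_log_one_add (h0 r hr)
    have h2 : Real.log (1 + x R r) ≥ 0 := Real.log_nonneg (by linarith [h0 r hr])
    nlinarith [hm r hr]
  have h1 : |L - l| < δ := lt_of_lt_of_le hLb (min_le_left _ _)
  have h2 : |L - l| < ε/2 := lt_of_lt_of_le hLb (min_le_right _ _)
  rw [Real.dist_eq, abs_lt]
  rw [abs_lt] at h1 h2
  constructor
  · linarith
  · nlinarith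


lemma esymm_rec (s : Finset ℕ) (x : ℕ → ℝ) (j : ℕ) :
    (∑ r ∈ s, x r) * ∑ T ∈ Finset.powersetCard j s, ∏ r ∈ T, x r
      = (j + 1 : ℝ) * ∑ U ∈ Finset.powersetCard (j+1) s, ∏ r ∈ U, x r
        + ∑ T ∈ Finset.powersetCard j s, (∑ r ∈ T, x r) * ∏ r ∈ T, x r := by
  have hsplit : ∀ T ∈ Finset.powersetCard j s,
      (∑ r ∈ s, x r) * ∏ r ∈ T, x r
        = (∑ r ∈ s \ T, x r * ∏ t ∈ T, x t) + (∑ r ∈ T, x r) * ∏ r ∈ T, x r := by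
    intro T hT
    have hTs : T ⊆ s := (Finset.mem_powersetCard.mp hT).1
    rw [← Finset.sum_sdiff hTs (f := x), add_mul, Finset.sum_mul]
  rw [Finset.mul_sum, Finset.sum_congr rfl hsplit, Finset.sum_add_distrib]
  congr 1
  have key : ∑ T ∈ Finset.powersetCard j s, ∑ r ∈ s \ T, x r * ∏ t ∈ T, x t
      = ∑ U ∈ Finset.powersetCard (j+1) s, ∑ r ∈ U, ∏ t ∈ U, x t := by
    rw [Finset.sum_sigma', Finset.sum_sigma']
    refine Finset.sum_nbij' (fun p => ⟨insert p.2 p.1, p.2⟩) (fun p => ⟨p.1.erase p.2, p.2⟩)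
      ?_ ?_ ?_ ?_ ?_
    · rintro ⟨T, r⟩ hp
      simp only [Finset.mem_sigma, Finset.mem_powersetCard] at hp ⊢
      obtain ⟨⟨hTs, hTc⟩, hr⟩ := hp
      rw [Finset.mem_sdiff] at hr
      refine ⟨⟨Finset.insert_subset hr.1 hTs, ?_⟩, Finset.mem_insert_self _ _⟩
      rw [Finset.card_insert_of_notMem hr.2, hTc]
    · rintro ⟨U, r⟩ hp
      simp only [Finset.mem_sigma, Finset.mem_powersetCard] at hp ⊢
      obtain ⟨⟨hUs, hUc⟩, hr⟩ := hp
      refine ⟨⟨(Finset.erase_subset _ _).trans hUs, ?_⟩, ?_⟩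
      · rw [Finset.card_erase_of_mem hr, hUc]; rfl
      · rw [Finset.mem_sdiff]
        exact ⟨hUs hr, Finset.notMem_erase _ _⟩
    · rintro ⟨T, r⟩ hp
      simp only [Finset.mem_sigma, Finset.mem_powersetCard, Finset.mem_sdiff] at hp
      simp [Finset.erase_insert hp.2.2]
    · rintro ⟨U, r⟩ hp
      simp only [Finset.mem_sigma, Finset.mem_powersetCard] at hp
      simp [Finset.insert_erase hp.2]
    · rintro ⟨T, r⟩ hp
      simp only [Finset.mem_sigma, Finset.mem_powersetCard, Finset.mem_sdiff] at hp
      rw [Finset.prod_insert hp.2.2]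
  rw [key]
  rw [Finset.mul_sum]
  refine Finset.sum_congr rfl fun U hU => ?_
  rw [Finset.sum_const, nsmul_eq_mul, (Finset.mem_powersetCard.mp hU).2]
  push_cast
  ring


lemma esymm_tendsto {x : ℕ → ℕ → ℝ} {l : ℝ}
    (hx0 : ∀ᶠ R in atTop, ∀ r ∈ Finset.range R, 0 ≤ x R r)
    (hsum : Tendsto (fun R => ∑ r ∈ Finset.range R, x R r) atTop (nhds l))
    (hmax : ∀ ε > (0:ℝ), ∀ᶠ R in atTop, ∀ r ∈ Finset.range R, x R r ≤ ε) :
    ∀ j : ℕ, Tendsto (fun R => ∑ T ∈ Finset.powersetCard j (Finset.range R), ∏ r ∈ T, x R r)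
      atTop (nhds (l ^ j / (Nat.factorial j))) := by
  intro j
  induction j with
  | zero => simpa using tendsto_const_nhds
  | succ j ih =>
    -- D R := ∑ T, (∑ r ∈ T, x R r) * ∏ r ∈ T, x R r tends to 0
    set E : ℕ → ℝ := fun R => ∑ T ∈ Finset.powersetCard j (Finset.range R), ∏ r ∈ T, x R r
      with hE
    set D : ℕ → ℝ := fun R =>
      ∑ T ∈ Finset.powersetCard j (Finset.range R), (∑ r ∈ T, x R r) * ∏ r ∈ T, x R r with hD
    have hEbdd : ∀ᶠ R in atTop, |E R| ≤ |l ^ j / (Nat.factorial j)| + 1 := by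
      filter_upwards [ih.eventually (Metric.closedBall_mem_nhds _ one_pos)] with R hR
      rw [Real.dist_eq] at hR
      have := abs_sub_abs_le_abs_sub (E R) (l ^ j / (Nat.factorial j))
      linarith
    have hD0 : Tendsto D atTop (nhds 0) := by
      rw [Metric.tendsto_nhds]
      intro ε hε
      set B : ℝ := |l ^ j / (Nat.factorial j)| + 1 with hB
      have hBpos : 0 < B := by positivity
      have hδ : 0 < ε / ((j+1) * B) := by positivity
      filter_upwards [hx0, hmax _ hδ, hEbdd] with R h0 hm hEb
      have hDnn : 0 ≤ D R := by
        refine Finset.sum_nonneg fun T hT => ?_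
        have hTs := (Finset.mem_powersetCard.mp hT).1
        have h1 : 0 ≤ ∑ r ∈ T, x R r := Finset.sum_nonneg fun r hr => h0 r (hTs hr)
        have h2 : 0 ≤ ∏ r ∈ T, x R r := Finset.prod_nonneg fun r hr => h0 r (hTs hr)
        positivity
      have hDle : D R ≤ (j * (ε / ((j+1) * B))) * E R := by
        rw [hD, hE, Finset.mul_sum]
        refine Finset.sum_le_sum fun T hT => ?_
        obtain ⟨hTs, hTc⟩ := Finset.mem_powersetCard.mp hT
        have h2 : 0 ≤ ∏ r ∈ T, x R r := Finset.prod_nonneg fun r hr => h0 r (hTs hr)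
        have h1 : ∑ r ∈ T, x R r ≤ j * (ε / ((j+1) * B)) := by
          calc ∑ r ∈ T, x R r ≤ ∑ _r ∈ T, (ε / ((j+1) * B)) :=
                Finset.sum_le_sum fun r hr => hm r (hTs hr)
            _ = j * (ε / ((j+1) * B)) := by rw [Finset.sum_const, hTc, nsmul_eq_mul]
        exact mul_le_mul_of_nonneg_right h1 h2
      rw [Real.dist_eq, sub_zero, abs_of_nonneg hDnn]
      have hER : E R ≤ B := le_trans (le_abs_self _) hEb
      have hEnn : 0 ≤ E R := by
        refine Finset.sum_nonneg fun T hT => ?_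
        exact Finset.prod_nonneg fun r hr => h0 r ((Finset.mem_powersetCard.mp hT).1 hr)
      calc D R ≤ (j * (ε / ((j+1) * B))) * E R := hDle
        _ ≤ (j * (ε / ((j+1) * B))) * B := by
            have : 0 ≤ j * (ε / ((j+1) * B)) := by positivity
            exact mul_le_mul_of_nonneg_left hER this
        _ = ε * (j / (j+1)) := by field_simp
        _ < ε := by
            have hj : (j:ℝ) / (j+1) < 1 := by
              rw [div_lt_one (by positivity)]; linarith
            nlinarith
    have hfun : ∀ R, (∑ T ∈ Finset.powersetCard (j+1) (Finset.range R), ∏ r ∈ T, x R r)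
        = ((∑ r ∈ Finset.range R, x R r) * E R - D R) / (j + 1) := by
      intro R
      have := esymm_rec (Finset.range R) (x R) j
      field_simp
      linarith
    have hlim : Tendsto (fun R => ((∑ r ∈ Finset.range R, x R r) * E R - D R) / (j + 1))
        atTop (nhds ((l * (l ^ j / (Nat.factorial j)) - 0) / (j + 1))) :=
      ((hsum.mul ih).sub hD0).div_const _
    rw [show ((l * (l ^ j / (Nat.factorial j)) - 0) / (j + 1))
        = l ^ (j+1) / (Nat.factorial (j+1)) by
      rw [Nat.factorial_succ]; push_cast; field_simp; ring]
      at hlim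
    exact hlim.congr (fun R => (hfun R).symm)


lemma meas_count_lt {Ω : Type*} [MeasurableSpace Ω] (μpr : Measure Ω) [IsProbabilityMeasure μpr]
    (X : ℕ → Ω → ℝ) (hmeas : ∀ r, Measurable (X r))
    (hindep : iIndepFun (m := fun _ : ℕ => (inferInstance : MeasurableSpace ℝ)) X μpr)
    (t : ℝ) (s : Finset ℕ) (k : ℕ) :
    μpr {ω | (s.filter (fun r => t < X r ω)).card < k}
      = ∑ S ∈ s.powerset.filter (fun S => S.card < k),
          ∏ r ∈ s, (if r ∈ S then μpr {ω | t < X r ω} else μpr {ω | X r ω ≤ t}) := by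
  classical
  set 𝒮 := s.powerset.filter (fun S => S.card < k) with h𝒮
  set C : Finset ℕ → ℕ → Set Ω := fun S r =>
    X r ⁻¹' (if r ∈ S then Set.Ioi t else Set.Iic t) with hC
  set ES : Finset ℕ → Set Ω := fun S => ⋂ r ∈ s, C S r with hES
  have hmem : ∀ S, S ⊆ s → ∀ ω, ω ∈ ES S ↔ s.filter (fun r => t < X r ω) = S := by
    intro S hSs ω
    simp only [hES, hC, Set.mem_iInter, Set.mem_preimage]
    constructor
    · intro h
      ext r
      simp only [Finset.mem_filter]
      constructor
      · rintro ⟨hrs, hrt⟩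
        by_contra hrS
        have := h r hrs
        rw [if_neg hrS] at this
        exact absurd hrt (not_lt.mpr this)
      · intro hrS
        have := h r (hSs hrS)
        rw [if_pos hrS] at this
        exact ⟨hSs hrS, this⟩
    · intro h r hrs
      by_cases hrS : r ∈ S
      · rw [if_pos hrS]
        have : r ∈ s.filter (fun r => t < X r ω) := h ▸ hrS
        exact (Finset.mem_filter.mp this).2
      · rw [if_neg hrS]
        by_contra hlt
        exact hrS (h ▸ Finset.mem_filter.mpr ⟨hrs, not_le.mp hlt⟩)
  have hset : {ω | (s.filter (fun r => t < X r ω)).card < k} = ⋃ S ∈ 𝒮, ES S := by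
    ext ω
    simp only [Set.mem_setOf_eq, Set.mem_iUnion, exists_prop]
    constructor
    · intro h
      refine ⟨s.filter (fun r => t < X r ω), ?_, ?_⟩
      · exact Finset.mem_filter.mpr ⟨Finset.mem_powerset.mpr (Finset.filter_subset _ _), h⟩
      · exact (hmem _ (Finset.filter_subset _ _) ω).mpr rfl
    · rintro ⟨S, hS, hω⟩
      obtain ⟨hSp, hSk⟩ := Finset.mem_filter.mp hS
      have := (hmem S (Finset.mem_powerset.mp hSp) ω).mp hω
      rw [this]
      exact hSk
  have hCmeas : ∀ S r, MeasurableSet (C S r) := by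
    intro S r
    exact (hmeas r) (by split <;> measurability)
  have hESmeas : ∀ S, MeasurableSet (ES S) := fun S =>
    Finset.measurableSet_biInter s fun r _ => hCmeas S r
  rw [hset, measure_biUnion_finset ?_ (fun S _ => hESmeas S)]
  · refine Finset.sum_congr rfl fun S hS => ?_
    obtain ⟨hSp, _⟩ := Finset.mem_filter.mp hS
    have := hindep.meas_biInter (S := s) (s := C S)
      (fun r _ => ⟨(if r ∈ S then Set.Ioi t else Set.Iic t), by split <;> measurability, rfl⟩)
    rw [hES, this]
    refine Finset.prod_congr rfl fun r _ => ?_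
    by_cases hrS : r ∈ S
    · simp only [hC, if_pos hrS]
      congr 1
    · simp only [hC, if_neg hrS]
      congr 1
  · intro S hS S' hS' hne
    rw [Finset.mem_coe, h𝒮, Finset.mem_filter] at hS hS'
    refine Set.disjoint_left.mpr fun ω hω hω' => hne ?_
    have h1 := (hmem S (Finset.mem_powerset.mp hS.1) ω).mp hω
    have h2 := (hmem S' (Finset.mem_powerset.mp hS'.1) ω).mp hω'
    rw [← h1, ← h2]


theorem barakat_kth_order_statistic
    {Ω : Type*} [MeasurableSpace Ω] (μpr : Measure Ω) [IsProbabilityMeasure μpr]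
    (X : ℕ → Ω → ℝ) (hmeas : ∀ r, Measurable (X r))
    (hindep : iIndepFun (m := fun _ : ℕ => (inferInstance : MeasurableSpace ℝ)) X μpr)
    (F : ℕ → ℝ → ℝ)
    (hFcont : ∀ r, Continuous (F r))
    (hFcdf : ∀ r γ, μpr {ω | X r ω ≤ γ} = ENNReal.ofReal (F r γ))
    (a b : ℕ → ℝ) (ha : ∀ R, 0 < a R) (γ : ℝ) (k : ℕ) (hk : 1 ≤ k)
    (hprod : Filter.Tendsto
      (fun R => ∏ r ∈ Finset.range R, F r (a R * γ + b R))
      Filter.atTop (nhds (Real.exp (-Real.exp (-γ)))))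
    (hmax : ∀ ε > (0 : ℝ), ∀ᶠ R in Filter.atTop,
      ∀ r ∈ Finset.range R, 1 - F r (a R * γ + b R) < ε) :
    Filter.Tendsto
      (fun R => (μpr {ω | ((Finset.range R).filter
          (fun r => a R * γ + b R < X r ω)).card < k}).toReal)
      Filter.atTop
      (nhds ((∑ r ∈ Finset.range k, (Real.exp (-γ)) ^ r / (Nat.factorial r)) *
        Real.exp (-Real.exp (-γ)))) := by
  classical
  set q : ℕ → ℕ → ℝ := fun R r => F r (a R * γ + b R) with hq
  set x : ℕ → ℕ → ℝ := fun R r => (1 - q R r) / q R r with hx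
  have hq1 : ∀ R r, q R r ≤ 1 := by
    intro R r
    have h := hFcdf r (a R * γ + b R)
    have h2 : μpr {ω | X r ω ≤ a R * γ + b R} ≤ 1 := prob_le_one
    rw [h] at h2
    exact ENNReal.ofReal_le_one.mp h2
  have hqhalf : ∀ᶠ R in atTop, ∀ r ∈ Finset.range R, (1:ℝ)/2 < q R r := by
    filter_upwards [hmax (1/2) (by norm_num)] with R h r hr
    have := h r hr; simp only [hq]; linarith
  have hx0 : ∀ᶠ R in atTop, ∀ r ∈ Finset.range R, 0 ≤ x R r := by
    filter_upwards [hqhalf] with R h r hr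
    exact div_nonneg (by linarith [hq1 R r]) (by linarith [h r hr])
  have hxmax : ∀ ε > (0:ℝ), ∀ᶠ R in atTop, ∀ r ∈ Finset.range R, x R r ≤ ε := by
    intro ε hε
    filter_upwards [hqhalf, hmax (ε/2) (by linarith)] with R h1 h2 r hr
    have ha1 := h1 r hr
    have ha2 := h2 r hr
    rw [hx, div_le_iff₀ (by linarith)]
    simp only [hq] at *
    nlinarith
  have hlog : Tendsto (fun R => ∑ r ∈ Finset.range R, Real.log (1 + x R r)) atTop
      (nhds (Real.exp (-γ))) := by
    have h1 := (Real.continuousAt_log (Real.exp_ne_zero (-Real.exp (-γ)))).tendsto.comp hprod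
    rw [Real.log_exp] at h1
    have h2 := h1.neg
    rw [neg_neg] at h2
    refine Tendsto.congr' ?_ h2
    filter_upwards [hqhalf] with R hR
    have hne : ∀ r ∈ Finset.range R, q R r ≠ 0 := fun r hr => by linarith [hR r hr]
    simp only [Function.comp_apply]
    rw [Real.log_prod hne, ← Finset.sum_neg_distrib]
    refine Finset.sum_congr rfl fun r hr => ?_
    have hxr : 1 + x R r = (q R r)⁻¹ := by
      rw [hx]
      field_simp [hne r hr]
      ring
    rw [hxr, Real.log_inv]
  have hsum := sum_tendsto_of_log hx0 hlog hxmax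
  have hEj := esymm_tendsto hx0 hsum hxmax
  have hG : Tendsto (fun R => (∑ j ∈ Finset.range k,
        ∑ T ∈ Finset.powersetCard j (Finset.range R), ∏ r ∈ T, x R r)
        * ∏ r ∈ Finset.range R, q R r) atTop
      (nhds ((∑ r ∈ Finset.range k, (Real.exp (-γ)) ^ r / (Nat.factorial r)) *
        Real.exp (-Real.exp (-γ)))) :=
    Tendsto.mul (tendsto_finset_sum _ fun j _ => hEj j) hprod
  refine Tendsto.congr' ?_ hG
  filter_upwards [hqhalf] with R hR
  have hqpos : ∀ r ∈ Finset.range R, (0:ℝ) < q R r := fun r hr => by linarith [hR r hr]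
  rw [meas_count_lt μpr X hmeas hindep (a R * γ + b R) (Finset.range R) k]
  have hfin : ∀ S ∈ (Finset.range R).powerset.filter (fun S => S.card < k),
      (∏ r ∈ Finset.range R,
        (if r ∈ S then μpr {ω | a R * γ + b R < X r ω} else μpr {ω | X r ω ≤ a R * γ + b R}))
        ≠ ⊤ := by
    intro S _
    refine (lt_of_le_of_lt (Finset.prod_le_one' fun r _ => ?_) ENNReal.one_lt_top).ne
    split
    · exact le_trans (measure_mono (Set.subset_univ _)) (by simp)
    · exact le_trans (measure_mono (Set.subset_univ _)) (by simp)
  rw [ENNReal.toReal_sum hfin]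
  have hterm : ∀ S ∈ (Finset.range R).powerset.filter (fun S => S.card < k),
      (∏ r ∈ Finset.range R,
        (if r ∈ S then μpr {ω | a R * γ + b R < X r ω} else μpr {ω | X r ω ≤ a R * γ + b R})).toReal
      = (∏ r ∈ Finset.range R, q R r) * ∏ r ∈ S, x R r := by
    intro S hS
    have hSs : S ⊆ Finset.range R := Finset.mem_powerset.mp (Finset.mem_filter.mp hS).1
    rw [ENNReal.toReal_prod]
    have hfac : ∀ r ∈ Finset.range R,
        ((if r ∈ S then μpr {ω | a R * γ + b R < X r ω}
          else μpr {ω | X r ω ≤ a R * γ + b R})).toReal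
        = if r ∈ S then 1 - q R r else q R r := by
      intro r hr
      have hcdf := hFcdf r (a R * γ + b R)
      have hcompl : {ω | a R * γ + b R < X r ω} = {ω | X r ω ≤ a R * γ + b R}ᶜ := by
        ext ω; simp [not_le]
      have hmeasb : MeasurableSet {ω | X r ω ≤ a R * γ + b R} :=
        (hmeas r) measurableSet_Iic
      by_cases hrS : r ∈ S
      · rw [if_pos hrS, if_pos hrS, hcompl, prob_compl_eq_one_sub hmeasb, hcdf,
          ENNReal.toReal_sub_of_le (ENNReal.ofReal_le_one.mpr (hq1 R r)) ENNReal.one_ne_top,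
          ENNReal.toReal_ofReal (le_of_lt (hqpos r hr)), ENNReal.toReal_one]
      · rw [if_neg hrS, if_neg hrS, hcdf, ENNReal.toReal_ofReal (le_of_lt (hqpos r hr))]
    rw [Finset.prod_congr rfl hfac, Finset.prod_ite]
    have h1 : (Finset.range R).filter (· ∈ S) = S := by
      rw [Finset.filter_mem_eq_inter, Finset.inter_eq_right.mpr hSs]
    have h2 : (Finset.range R).filter (fun r => r ∉ S) = Finset.range R \ S :=
      (Finset.sdiff_eq_filter _ _).symm
    rw [h1, h2]
    have h3 : ∏ r ∈ S, (1 - q R r) = (∏ r ∈ S, x R r) * ∏ r ∈ S, q R r := by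
      rw [← Finset.prod_mul_distrib]
      refine Finset.prod_congr rfl fun r hr => ?_
      exact (div_mul_cancel₀ _ (ne_of_gt (hqpos r (hSs hr)))).symm
    rw [h3, mul_assoc, mul_comm (∏ r ∈ S, q R r), Finset.prod_sdiff hSs, mul_comm]
  rw [Finset.sum_congr rfl hterm, ← Finset.mul_sum, mul_comm]
  congr 1
  rw [← Finset.sum_fiberwise_of_maps_to (g := Finset.card) (t := Finset.range k)
    (fun S hS => Finset.mem_range.mpr (Finset.mem_filter.mp hS).2) (fun S => ∏ r ∈ S, x R r)]
  refine Finset.sum_congr rfl fun j hj => ?_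
  have hjk := Finset.mem_range.mp hj
  rw [Finset.powersetCard_eq_filter, Finset.filter_filter]
  refine Finset.sum_congr ?_ fun _ _ => rfl
  refine Finset.filter_congr fun S _ => ?_
  constructor
  · intro h
    exact ⟨h.trans_lt hjk, h⟩
  · intro h
    exact h.2
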